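/- (Transitivity of transverse cones) Let C be a convex polyhedral cone in a Euclidean space V, let F' ⪯ F ⪯ C be faces. Then t(C,F) = t(t(C,F'), t(F,F')), where t(C,F) denotes the orthogonal projection of C onto lin(F)^⊥. -/

import Mathlib

/-- The closed convex polyhedral cone generated by vectors `v 0, …, v (n-1)`. -/
def polyCone {V : Type*} [AddCommGroup V] [Module ℝ V] {n : ℕ} (v : Fin n → V) : Set V :=
  {x | ∃ c : Fin n → ℝ, (∀ i, 0 ≤ c i) ∧ x = ∑ i, c i • v i}

/-- `C` is a (closed convex) polyhedral cone. -/
def IsPolyCone {V : Type*} [AddCommGroup V] [Module ℝ V] (C : Set V) : Prop :=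
  ∃ (n : ℕ) (v : Fin n → V), C = polyCone v

/-- `F` is a face of the cone `C` (cut out by a supporting linear functional). -/
def IsFace {V : Type*} [AddCommGroup V] [Module ℝ V] (C F : Set V) : Prop :=
  ∃ ℓ : V →ₗ[ℝ] ℝ, (∀ x ∈ C, ℓ x ≤ 0) ∧ F = {x ∈ C | ℓ x = 0}

variable {V : Type*} [NormedAddCommGroup V] [InnerProductSpace ℝ V] [FiniteDimensional ℝ V]

/-- The transverse cone `t(C,F)`: the image of `C` under the orthogonal projection onto
the orthogonal complement of the linear span of `F`. -/
noncomputable def tCone (C F : Set V) : Set V :=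
  (fun x => (Submodule.orthogonalProjectionOnto (Submodule.span ℝ F)ᗮ x : V)) '' C

/-- transitivity of transverse cones: if `F' ⪯ F ⪯ C` are faces of a
convex polyhedral cone `C`, then `t(C,F) = t(t(C,F'), t(F,F'))`. -/
theorem tCone_trans (C F F' : Set V) (hC : IsPolyCone C)
    (hF : IsFace C F) (hF' : IsFace F F') :
    tCone C F = tCone (tCone C F') (tCone F F') := by
  obtain ⟨ℓ, -, hFeq⟩ := hF'
  have hF'F : F' ⊆ F := by rw [hFeq]; exact fun x hx => hx.1
  set W' := Submodule.span ℝ F' with hW'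
  set W := Submodule.span ℝ F with hW
  have hle : W' ≤ W := Submodule.span_mono hF'F
  let p' : V →ₗ[ℝ] V := W'ᗮ.subtype ∘ₗ (Submodule.orthogonalProjectionOnto W'ᗮ).toLinearMap
  have hp' : ∀ y : V, p' y = (Submodule.orthogonalProjectionOnto W'ᗮ y : V) := fun y => rfl
  have hspan : Submodule.span ℝ (tCone F F') = W.map p' := by
    show Submodule.span ℝ (p' '' F) = W.map p'
    rw [Submodule.span_image]
  -- key pointwise identity
  have key : ∀ y : V,
      (Submodule.orthogonalProjectionOnto (Submodule.span ℝ (tCone F F'))ᗮ (p' y) : V)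
        = (Submodule.orthogonalProjectionOnto Wᗮ y : V) := by
    intro y
    rw [← Submodule.starProjection_apply]
    apply Submodule.eq_starProjection_of_mem_orthogonal
    · rw [hspan, Submodule.mem_orthogonal]
      rintro u ⟨w, hw, rfl⟩
      have hpw : p' w ∈ W := by
        rw [hp', ← Submodule.starProjection_apply, Submodule.starProjection_orthogonal_val]
        exact Submodule.sub_mem _ hw (hle (Submodule.orthogonalProjectionOnto W' w).2)
      rw [real_inner_comm]
      exact (Submodule.mem_orthogonal Wᗮ _).1
        (W.le_orthogonal_orthogonal hpw) _ (Submodule.orthogonalProjectionOnto Wᗮ y).2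
    · rw [hspan, Submodule.orthogonal_orthogonal]
      have h3 : p' y - (Submodule.orthogonalProjectionOnto Wᗮ y : V) = p' ((Submodule.orthogonalProjectionOnto W y : V)) := by
        simp only [hp', ← Submodule.starProjection_apply, Submodule.starProjection_orthogonal_val]
        simp only [Submodule.starProjection_apply]
        have h2 : (Submodule.orthogonalProjectionOnto W' ((Submodule.orthogonalProjectionOnto W y : V)) : V)
            = (Submodule.orthogonalProjectionOnto W' y : V) := by
          rw [← Submodule.starProjection_apply W, Submodule.orthogonalProjectionOnto_starProjection_of_le hle]
        rw [h2]
        abel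
      rw [h3]
      exact Submodule.mem_map_of_mem (Submodule.orthogonalProjectionOnto W y).2
  show (fun x => (Submodule.orthogonalProjectionOnto Wᗮ x : V)) '' C
      = (fun x => (Submodule.orthogonalProjectionOnto (Submodule.span ℝ (tCone F F'))ᗮ x : V)) '' (p' '' C)
  rw [Set.image_image]
  exact (Set.image_congr fun y _ => (key y).symm)
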